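/- Let n ≥ 2, let A be an m×n real matrix, b ∈ ℝ^m, γ > 0, let e = (1,…,1)ᵀ ∈ ℝ^n, Ã_i = ∑_{j=1}^n A_{ij}, and assume ∑_{i=1}^m Ã_i² ≠ 0. Let V = {x ∈ ℝ^n : ∑_i x_i = 0}, let ∇⁺ : ℝ^{n−1} → V be the inverse of the finite difference operator ∇ restricted to V, and define μ(x₀) = (∑_i Ã_i b_i − ∑_i Ã_i ∑_j A_{ij} x_{0,j}) / (∑_i Ã_i²), A′_{kj} = A_{kj} − Ã_k (∑_i Ã_i A_{ij}) / (∑_i Ã_i²), and b′_k = b_k − Ã_k (∑_i Ã_i b_i) / (∑_i Ã_i²). If u* ∈ ℝ^{n−1} minimizes u ↦ γ‖u‖₀ + ‖A′∇⁺u − b′‖₂² over ℝ^{n−1}, then x* = ∇⁺u* + μ(∇⁺u*)·e minimizes the inverse Potts functional P_γ(x) = γ‖∇x‖₀ + ‖Ax − b‖₂² over ℝ^n. -/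

import Mathlib

open scoped BigOperators

noncomputable section

/-- The jump set of a signal `x ∈ ℝⁿ`: the indices `i` with `x i ≠ x (i+1)`. -/
def jumpSet {n : ℕ} (x : Fin n → ℝ) : Set (Fin n) :=
  {i | ∃ h : (i : ℕ) + 1 < n, x i ≠ x ⟨(i : ℕ) + 1, h⟩}

/-- `‖∇x‖₀`: the number of jumps of `x`. -/
def nJumps {n : ℕ} (x : Fin n → ℝ) : ℕ := (jumpSet x).ncard

/-- `‖u‖₀`: the number of nonzero entries of `u`. -/
def l0 {n : ℕ} (u : Fin n → ℝ) : ℕ := Set.ncard {i | u i ≠ 0}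

/-- The finite difference operator `∇ : ℝⁿ → ℝ^{n−1}`, `(∇x)_i = x_{i+1} − x_i`. -/
def diffOp {n : ℕ} (x : Fin n → ℝ) : Fin (n - 1) → ℝ :=
  fun i => x ⟨(i : ℕ) + 1, by have := i.isLt; omega⟩ - x ⟨(i : ℕ), by have := i.isLt; omega⟩

/-- The row sums `Ã_i = ∑_j A_{ij}` of a matrix. -/
def rowSum {m n : ℕ} (A : Matrix (Fin m) (Fin n) ℝ) (i : Fin m) : ℝ := ∑ j, A i j

/-- `μ(x₀) = (∑ᵢ Ãᵢ bᵢ − ∑ᵢ Ãᵢ ∑ⱼ A_{ij} x₀ⱼ) / ∑ᵢ Ãᵢ²`. -/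
def muOf {m n : ℕ} (A : Matrix (Fin m) (Fin n) ℝ) (b : Fin m → ℝ)
    (x₀ : Fin n → ℝ) : ℝ :=
  (∑ i, rowSum A i * b i - ∑ i, rowSum A i * (∑ j, A i j * x₀ j)) /
    ∑ i, (rowSum A i) ^ 2

/-- The matrix `A′` with `A′_{kj} = A_{kj} − Ã_k (∑ᵢ Ãᵢ A_{ij}) / ∑ᵢ Ãᵢ²`. -/
def Aprime {m n : ℕ} (A : Matrix (Fin m) (Fin n) ℝ) : Matrix (Fin m) (Fin n) ℝ :=
  Matrix.of fun k j =>
    A k j - rowSum A k * (∑ i, rowSum A i * A i j) / ∑ i, (rowSum A i) ^ 2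

/-- The vector `b′` with `b′_k = b_k − Ã_k (∑ᵢ Ãᵢ bᵢ) / ∑ᵢ Ãᵢ²`. -/
def bprime {m n : ℕ} (A : Matrix (Fin m) (Fin n) ℝ) (b : Fin m → ℝ) :
    Fin m → ℝ :=
  fun k => b k - rowSum A k * (∑ i, rowSum A i * b i) / ∑ i, (rowSum A i) ^ 2

/-- The constant-one vector `e ∈ ℝⁿ`. -/
def ones (n : ℕ) : Fin n → ℝ := fun _ => 1

lemma diffOp_add_const {n : ℕ} (x : Fin n → ℝ) (c : ℝ) :
    diffOp (x + c • ones n) = diffOp x := by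
  funext i
  simp [diffOp, ones]

lemma nJumps_eq_l0_diffOp {n : ℕ} (x : Fin n → ℝ) : nJumps x = l0 (diffOp x) := by
  unfold nJumps l0 jumpSet
  have hinj : Function.Injective
      (fun i : Fin (n-1) => (⟨(i:ℕ), lt_of_lt_of_le i.isLt (Nat.sub_le n 1)⟩ : Fin n)) := by
    intro a b hab
    simp only [Fin.mk.injEq] at hab
    exact Fin.ext hab
  have hset : {i : Fin n | ∃ h : (i:ℕ)+1 < n, x i ≠ x ⟨(i:ℕ)+1, h⟩}
      = (fun i : Fin (n-1) => (⟨(i:ℕ), lt_of_lt_of_le i.isLt (Nat.sub_le n 1)⟩ : Fin n)) ''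
        {i | diffOp x i ≠ 0} := by
    ext ⟨i, hi⟩
    simp only [Set.mem_setOf_eq, Set.mem_image]
    constructor
    · rintro ⟨h, hne⟩
      refine ⟨⟨i, by omega⟩, ?_, rfl⟩
      simp only [diffOp, Set.mem_setOf_eq]
      exact sub_ne_zero_of_ne (Ne.symm hne)
    · rintro ⟨⟨j, hj⟩, hne, heq⟩
      have hj2 : j + 1 < n := by omega
      have hji : j = i := congrArg Fin.val heq
      subst hji
      refine ⟨hj2, ?_⟩
      simp only [diffOp, Set.mem_setOf_eq] at hne
      exact (sub_ne_zero.mp hne).symm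
  rw [hset, Set.ncard_image_of_injective _ hinj]

lemma diffOp_inj {n : ℕ} (hn : 0 < n) (v w : Fin n → ℝ)
    (hv : ∑ i, v i = 0) (hw : ∑ i, w i = 0) (h : diffOp v = diffOp w) : v = w := by
  have key : ∀ k (hk : k < n), v ⟨k, hk⟩ - w ⟨k, hk⟩ = v ⟨0, hn⟩ - w ⟨0, hn⟩ := by
    intro k
    induction k with
    | zero => intro hk; rfl
    | succ k ih =>
      intro hk
      have hk' : k < n - 1 := by omega
      have := congrFun h ⟨k, hk'⟩
      simp only [diffOp] at this
      have ihk := ih (by omega)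
      linarith
  have hsum : ∑ i : Fin n, (v i - w i) = 0 := by
    rw [Finset.sum_sub_distrib, hv, hw, sub_zero]
  have hconst : ∀ i : Fin n, v i - w i = v ⟨0, hn⟩ - w ⟨0, hn⟩ := fun ⟨k, hk⟩ => key k hk
  have : ∑ i : Fin n, (v i - w i) = (n : ℝ) * (v ⟨0, hn⟩ - w ⟨0, hn⟩) := by
    rw [Finset.sum_congr rfl (fun i _ => hconst i)]
    simp [mul_comm]
    ring
  have hzero : v ⟨0, hn⟩ - w ⟨0, hn⟩ = 0 := by
    rw [this] at hsum
    have hn' : (n : ℝ) ≠ 0 := Nat.cast_ne_zero.mpr (by omega)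
    exact (mul_eq_zero.mp hsum).resolve_left hn'
  funext i
  have := hconst i
  rw [hzero] at this
  linarith

lemma sum_sq_expand {m : ℕ} (β q : Fin m → ℝ) (μ : ℝ) :
    ∑ k, (q k + μ * β k)^2
      = ∑ k, q k ^2 + 2*μ*(∑ k, β k * q k) + μ^2 * ∑ k, β k^2 := by
  rw [show ∑ k, (q k + μ * β k)^2
      = ∑ k, (q k^2 + (2*μ)*(β k * q k) + μ^2 * β k^2) from
    Finset.sum_congr rfl (fun k _ => by ring)]
  rw [Finset.sum_add_distrib, Finset.sum_add_distrib, ← Finset.mul_sum, ← Finset.mul_sum]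

lemma fid_decomp {m : ℕ} (β q : Fin m → ℝ) (hs : ∑ i, β i^2 ≠ 0) (μ : ℝ) :
    ∑ k, (q k + μ * β k)^2
      = ∑ k, (q k - ((∑ i, β i * q i)/(∑ i, β i^2)) * β k)^2
        + (∑ i, β i^2) * (μ + (∑ i, β i * q i)/(∑ i, β i^2))^2 := by
  set s := ∑ i, β i^2 with hsdef
  set t := ∑ i, β i * q i with htdef
  have h2 : ∑ k, (q k - t/s * β k)^2 = ∑ k, (q k + (-(t/s)) * β k)^2 :=
    Finset.sum_congr rfl (fun k _ => by ring)
  rw [sum_sq_expand, h2, sum_sq_expand, ← htdef, ← hsdef]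
  field_simp
  ring

/-- If `u*` minimizes the sparsity functional `γ‖u‖₀ + ‖A′∇⁺u − b′‖₂²` over
`ℝ^{n−1}`, then `x* = ∇⁺u* + μ(∇⁺u*)·e` minimizes the inverse Potts functional
`P_γ(x) = γ‖∇x‖₀ + ‖Ax − b‖₂²` over `ℝⁿ`.  Here `∇⁺` is the inverse of the
finite difference operator restricted to the zero-mean subspace `V`,
characterized by `∑ᵢ (∇⁺u)ᵢ = 0` and `∇(∇⁺u) = u`. -/
theorem inverse_potts_from_sparsity (m n : ℕ) (hn : 2 ≤ n)
    (A : Matrix (Fin m) (Fin n) ℝ) (b : Fin m → ℝ) (γ : ℝ) (hγ : 0 < γ)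
    (hA : ∑ i, (rowSum A i) ^ 2 ≠ 0)
    (gplus : (Fin (n - 1) → ℝ) → (Fin n → ℝ))
    (hgplusV : ∀ u : Fin (n - 1) → ℝ, ∑ i, gplus u i = 0)
    (hgplusInv : ∀ u : Fin (n - 1) → ℝ, diffOp (gplus u) = u)
    (ustar : Fin (n - 1) → ℝ)
    (hmin : ∀ u : Fin (n - 1) → ℝ,
      γ * (l0 ustar : ℝ) + ∑ i, ((Aprime A).mulVec (gplus ustar) i - bprime A b i) ^ 2 ≤
        γ * (l0 u : ℝ) + ∑ i, ((Aprime A).mulVec (gplus u) i - bprime A b i) ^ 2) :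
    ∀ x : Fin n → ℝ,
      γ * (nJumps (gplus ustar + muOf A b (gplus ustar) • ones n) : ℝ) +
          ∑ i, (A.mulVec (gplus ustar + muOf A b (gplus ustar) • ones n) i - b i) ^ 2 ≤
        γ * (nJumps x : ℝ) + ∑ i, (A.mulVec x i - b i) ^ 2 := by
  intro x
  set s := ∑ i, (rowSum A i)^2 with hs
  have hnpos : 0 < n := by omega
  have hAone : ∀ (w : Fin n → ℝ) (c : ℝ) (k : Fin m),
      A.mulVec (w + c • ones n) k - b k = (A.mulVec w k - b k) + c * rowSum A k := by
    intro w c k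
    simp only [Matrix.mulVec, dotProduct, Pi.add_apply, Pi.smul_apply, ones, smul_eq_mul,
      mul_one, rowSum]
    rw [show ∑ j, A k j * (w j + c) = ∑ j, (A k j * w j + c * A k j) from
      Finset.sum_congr rfl (fun j _ => by ring)]
    rw [Finset.sum_add_distrib, ← Finset.mul_sum]
    ring
  have hA' : ∀ (w : Fin n → ℝ) (k : Fin m),
      (Aprime A).mulVec w k - bprime A b k
        = (A.mulVec w k - b k)
          - ((∑ i, rowSum A i * (A.mulVec w i - b i))/s) * rowSum A k := by
    intro w k
    have swap : ∑ j, (∑ i, rowSum A i * A i j) * w j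
        = ∑ i, rowSum A i * (∑ j, A i j * w j) := by
      simp_rw [Finset.sum_mul, Finset.mul_sum]
      rw [Finset.sum_comm]
      exact Finset.sum_congr rfl (fun i _ => Finset.sum_congr rfl (fun j _ => by ring))
    have hsplit : ∑ i, rowSum A i * ((∑ j, A i j * w j) - b i)
        = (∑ i, rowSum A i * (∑ j, A i j * w j)) - ∑ i, rowSum A i * b i := by
      rw [← Finset.sum_sub_distrib]
      exact Finset.sum_congr rfl (fun i _ => by ring)
    simp only [Aprime, Matrix.mulVec, dotProduct, Matrix.of_apply, bprime]
    have expand : ∑ j, (A k j - rowSum A k * (∑ i, rowSum A i * A i j) / s) * w j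
        = (∑ j, A k j * w j) - (rowSum A k / s) * ∑ j, (∑ i, rowSum A i * A i j) * w j := by
      rw [Finset.mul_sum, ← Finset.sum_sub_distrib]
      exact Finset.sum_congr rfl (fun j _ => by ring)
    rw [expand, swap, hsplit]
    ring
  have fidelity : ∀ (w : Fin n → ℝ) (c : ℝ),
      ∑ k, (A.mulVec (w + c • ones n) k - b k)^2
        = ∑ k, ((Aprime A).mulVec w k - bprime A b k)^2 + s * (c - muOf A b w)^2 := by
    intro w c
    rw [Finset.sum_congr rfl (fun k _ => by rw [hAone w c k])]
    rw [fid_decomp (rowSum A) (fun k => A.mulVec w k - b k) hA c]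
    have hmu : muOf A b w
        = -((∑ i, rowSum A i * (A.mulVec w i - b i)) / s) := by
      have hnum : ∑ i, rowSum A i * b i - ∑ i, rowSum A i * (∑ j, A i j * w j)
          = -(∑ i, rowSum A i * (A.mulVec w i - b i)) := by
        simp only [Matrix.mulVec, dotProduct]
        rw [← Finset.sum_sub_distrib, ← Finset.sum_neg_distrib]
        exact Finset.sum_congr rfl (fun i _ => by ring)
      unfold muOf
      rw [← hs, hnum, neg_div]
    congr 1
    · exact Finset.sum_congr rfl (fun k _ => by rw [hA' w k])
    · rw [hmu, hs]; ring_nf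
  set v := gplus ustar with hv
  have hL1 : nJumps (v + muOf A b v • ones n) = l0 ustar := by
    rw [nJumps_eq_l0_diffOp, diffOp_add_const, hgplusInv]
  have hL2 : ∑ k, (A.mulVec (v + muOf A b v • ones n) k - b k)^2
      = ∑ k, ((Aprime A).mulVec v k - bprime A b k)^2 := by
    rw [fidelity v (muOf A b v)]
    simp
  set u := diffOp x with hu
  set mx := (∑ i, x i) / n with hmx
  have hgu : gplus u = x + (-mx) • ones n := by
    apply diffOp_inj hnpos
    · exact hgplusV u
    · simp only [Pi.add_apply, Pi.smul_apply, ones, smul_eq_mul, mul_one]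
      rw [Finset.sum_add_distrib]
      simp only [Finset.sum_const, Finset.card_univ, Fintype.card_fin, nsmul_eq_mul, hmx]
      field_simp
      ring
    · rw [hgplusInv, diffOp_add_const, hu]
  have hxdecomp : x = gplus u + mx • ones n := by
    funext i
    rw [hgu]
    simp only [Pi.add_apply, Pi.smul_apply, ones, smul_eq_mul, mul_one]
    ring
  have hR1 : nJumps x = l0 u := by rw [nJumps_eq_l0_diffOp]
  have hR2 : ∑ k, (A.mulVec x k - b k)^2
      = ∑ k, ((Aprime A).mulVec (gplus u) k - bprime A b k)^2
        + s * (mx - muOf A b (gplus u))^2 := by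
    conv_lhs => rw [hxdecomp]
    exact fidelity (gplus u) mx
  have hs_nonneg : 0 ≤ s := Finset.sum_nonneg (fun i _ => sq_nonneg _)
  have hterm : 0 ≤ s * (mx - muOf A b (gplus u))^2 :=
    mul_nonneg hs_nonneg (sq_nonneg _)
  have hmu := hmin u
  rw [hL1, hL2, hR1, hR2]
  linarith
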